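/- Let G = (V,E) be a finite graph with V = {1,…,n}. For a spanning subgraph H = (V,F) with F ⊆ E, let D(H) = (d₁,…,dₙ) ∈ ℕⁿ be its degree sequence, where dᵢ is the degree of vertex i in H. Then the set {D(H) : H a spanning subgraph of G} ⊆ ℕⁿ is a jump system. -/

import Mathlib

open Classical

noncomputable def dego {n : ℕ} (C : Finset (Sym2 (Fin n))) (i : Fin n) : ℤ :=
  ((C.filter (fun e => i ∈ e)).card : ℤ)

lemma dego_insert {n : ℕ} (C : Finset (Sym2 (Fin n))) (e : Sym2 (Fin n)) (he : e ∉ C)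
    (i : Fin n) :
    dego (insert e C) i = dego C i + if i ∈ e then 1 else 0 := by
  unfold dego
  rw [Finset.filter_insert]
  split_ifs with h
  · rw [Finset.card_insert_of_notMem (fun hc => he (Finset.mem_of_mem_filter _ hc))]
    push_cast; ring
  · simp

lemma dego_erase {n : ℕ} (C : Finset (Sym2 (Fin n))) (f : Sym2 (Fin n)) (hf : f ∈ C)
    (i : Fin n) :
    dego (C.erase f) i = dego C i - if i ∈ f then 1 else 0 := by
  unfold dego
  rw [Finset.filter_erase]
  by_cases h : i ∈ f
  · rw [Finset.card_erase_of_mem (Finset.mem_filter.mpr ⟨hf, h⟩)]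
    have h1 : 0 < (C.filter (fun e => i ∈ e)).card :=
      Finset.card_pos.mpr ⟨f, Finset.mem_filter.mpr ⟨hf, h⟩⟩
    simp only [if_pos h]
    omega
  · rw [Finset.erase_eq_of_notMem
      (show f ∉ C.filter (fun e => i ∈ e) from fun hc => h (Finset.mem_filter.mp hc).2)]
    simp [h]

lemma exists_incident {n : ℕ} (C D : Finset (Sym2 (Fin n))) (w : Fin n)
    (h : dego D w < dego C w) : ∃ f, f ∈ C ∧ w ∈ f ∧ f ∉ D := by
  by_contra hc
  push_neg at hc
  have hsub : C.filter (fun e => w ∈ e) ⊆ D.filter (fun e => w ∈ e) := by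
    intro f hf
    rw [Finset.mem_filter] at hf ⊢
    exact ⟨hc f hf.1 hf.2, hf.2⟩
  have := Finset.card_le_card hsub
  unfold dego at h
  omega

lemma sum_single' {n : ℕ} (g : Fin n → ℤ) (w : Fin n) (h : ∀ i, i ≠ w → g i = 0) :
    ∑ i, g i = g w :=
  Finset.sum_eq_single w (fun b _ hb => h b hb) (by simp)

lemma step_sum {n : ℕ} (x y τ : Fin n → ℤ) (w : Fin n) (h0 : ∀ i, i ≠ w → τ i = 0)
    (hw : |x w + τ w - y w| = |x w - y w| - 1) :
    (∑ i, |x i + τ i - y i|) = (∑ i, |x i - y i|) - 1 := by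
  have h1 : ∑ i, (|x i + τ i - y i| - |x i - y i|) = -1 := by
    rw [sum_single' _ w (fun i hi => by rw [h0 i hi, add_zero, sub_self])]
    rw [hw]; ring
  rw [Finset.sum_sub_distrib] at h1
  linarith

lemma pair_indicator {n : ℕ} (f : Sym2 (Fin n)) (w z : Fin n) (hf : f = s(w, z))
    (i : Fin n) :
    (if i ∈ f then (1:ℤ) else 0) = if i = w then (if i = z then 1 else 1)
      else (if i = z then 1 else 0) := by
  subst hf
  simp only [Sym2.mem_iff]
  by_cases h1 : i = w <;> by_cases h2 : i = z <;> simp_all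

lemma key {n : ℕ} (E : Finset (Sym2 (Fin n))) (hE : ∀ e ∈ E, ¬ e.IsDiag)
    (F' : Finset (Sym2 (Fin n))) (hF'E : F' ⊆ E) (y : Fin n → ℤ)
    (hy : ∀ i, y i = dego F' i) :
    ∀ m : ℕ, ∀ C : Finset (Sym2 (Fin n)), C ⊆ E →
      ∀ (x : Fin n → ℤ) (w : Fin n) (δ : ℤ), (δ = 1 ∨ δ = -1) →
      (C \ F').card + (F' \ C).card ≤ m →
      (∀ i, dego C i = x i + δ * (if i = w then 1 else 0)) →
      ∃ τ : Fin n → ℤ, (∑ i, |τ i|) = 1 ∧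
        (∑ i, |x i + τ i - y i|) = (∑ i, |x i - y i|) - 1 ∧
        ∃ C', C' ⊆ E ∧ ∀ i, x i + τ i = dego C' i := by
  intro m
  induction m with
  | zero =>
    intro C hCE x w δ hδ hm hinv
    by_cases hs : 1 ≤ δ * (y w - x w)
    · refine ⟨fun i => if i = w then δ else 0, ?_, ?_, C, hCE, ?_⟩
      · rw [sum_single' _ w (fun i hi => by simp [hi])]
        simp only [eq_self_iff_true, if_true]
        rcases hδ with h | h <;> simp [h]
      · apply step_sum _ _ _ w (fun i hi => by simp [hi])
        simp only [eq_self_iff_true, if_true]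
        rcases hδ with h | h <;> subst h
        · rw [abs_of_nonpos (by linarith), abs_of_nonpos (by linarith)]; ring
        · rw [abs_of_nonneg (by linarith), abs_of_nonneg (by linarith)]; ring
      · intro i
        rw [hinv i]
        by_cases h : i = w <;> simp [h]
    · exfalso
      rcases hδ with h | h <;> subst h
      · have hxy : y w ≤ x w := by nlinarith
        have hdC : dego F' w < dego C w := by
          rw [← hy w, hinv w]; simp; omega
        obtain ⟨f, hfC, hwf, hfF'⟩ := exists_incident C F' w hdC
        have : f ∈ C \ F' := Finset.mem_sdiff.mpr ⟨hfC, hfF'⟩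
        have := Finset.card_pos.mpr ⟨f, this⟩
        omega
      · have hxy : x w ≤ y w := by nlinarith
        have hdC : dego C w < dego F' w := by
          rw [← hy w, hinv w]; simp; omega
        obtain ⟨e, heF', hwe, heC⟩ := exists_incident F' C w hdC
        have : e ∈ F' \ C := Finset.mem_sdiff.mpr ⟨heF', heC⟩
        have := Finset.card_pos.mpr ⟨e, this⟩
        omega
  | succ m ih =>
    intro C hCE x w δ hδ hm hinv
    by_cases hs : 1 ≤ δ * (y w - x w)
    · refine ⟨fun i => if i = w then δ else 0, ?_, ?_, C, hCE, ?_⟩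
      · rw [sum_single' _ w (fun i hi => by simp [hi])]
        simp only [eq_self_iff_true, if_true]
        rcases hδ with h | h <;> simp [h]
      · apply step_sum _ _ _ w (fun i hi => by simp [hi])
        simp only [eq_self_iff_true, if_true]
        rcases hδ with h | h <;> subst h
        · rw [abs_of_nonpos (by linarith), abs_of_nonpos (by linarith)]; ring
        · rw [abs_of_nonneg (by linarith), abs_of_nonneg (by linarith)]; ring
      · intro i
        rw [hinv i]
        by_cases h : i = w <;> simp [h]
    · rcases hδ with h | h <;> subst h
      · -- δ = 1 : remove an edge of C \ F' at w
        have hxy : y w ≤ x w := by nlinarith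
        have hdC : dego F' w < dego C w := by
          rw [← hy w, hinv w]; simp; omega
        obtain ⟨f, hfC, hwf, hfF'⟩ := exists_incident C F' w hdC
        have hnd : ¬ f.IsDiag := hE f (hCE hfC)
        have hspec : s(w, Sym2.Mem.other hwf) = f := Sym2.other_spec hwf
        set z := Sym2.Mem.other hwf with hzdef
        have hzw : z ≠ w := Sym2.other_ne hnd hwf
        have hfd : f ∈ C \ F' := Finset.mem_sdiff.mpr ⟨hfC, hfF'⟩
        have hcard : 0 < (C \ F').card := Finset.card_pos.mpr ⟨f, hfd⟩
        have h1 : (C.erase f) \ F' = (C \ F').erase f := by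
          ext a
          simp only [Finset.mem_sdiff, Finset.mem_erase]
          tauto
        have h2 : F' \ (C.erase f) = F' \ C := by
          ext a
          simp only [Finset.mem_sdiff, Finset.mem_erase]
          by_cases ha : a = f
          · subst ha; simp [hfF']
          · tauto
        have hm' : ((C.erase f) \ F').card + (F' \ (C.erase f)).card ≤ m := by
          rw [h1, h2, Finset.card_erase_of_mem hfd]
          omega
        have hinv' : ∀ i, dego (C.erase f) i = x i + (-1) * (if i = z then 1 else 0) := by
          intro i
          rw [dego_erase C f hfC i, hinv i, pair_indicator f w z hspec.symm i]
          split_ifs with ha hb hc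
          · exact absurd (hb.symm.trans ha) hzw
          · ring
          · ring
          · ring
        exact ih (C.erase f) (fun a ha => hCE (Finset.mem_of_mem_erase ha)) x z (-1)
          (Or.inr rfl) hm' hinv'
      · -- δ = -1 : add an edge of F' \ C at w
        have hxy : x w ≤ y w := by nlinarith
        have hdC : dego C w < dego F' w := by
          rw [← hy w, hinv w]; simp; omega
        obtain ⟨e, heF', hwe, heC⟩ := exists_incident F' C w hdC
        have hnd : ¬ e.IsDiag := hE e (hF'E heF')
        have hspec : s(w, Sym2.Mem.other hwe) = e := Sym2.other_spec hwe
        set z := Sym2.Mem.other hwe with hzdef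
        have hzw : z ≠ w := Sym2.other_ne hnd hwe
        have hed : e ∈ F' \ C := Finset.mem_sdiff.mpr ⟨heF', heC⟩
        have hcard : 0 < (F' \ C).card := Finset.card_pos.mpr ⟨e, hed⟩
        have h1 : (insert e C) \ F' = C \ F' := by
          ext a
          simp only [Finset.mem_sdiff, Finset.mem_insert]
          by_cases ha : a = e
          · subst ha; simp [heF']
          · tauto
        have h2 : F' \ (insert e C) = (F' \ C).erase e := by
          ext a
          simp only [Finset.mem_sdiff, Finset.mem_insert, Finset.mem_erase]
          tauto
        have hm' : ((insert e C) \ F').card + (F' \ (insert e C)).card ≤ m := by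
          rw [h1, h2, Finset.card_erase_of_mem hed]
          omega
        have hinv' : ∀ i, dego (insert e C) i = x i + 1 * (if i = z then 1 else 0) := by
          intro i
          rw [dego_insert C e heC i, hinv i, pair_indicator e w z hspec.symm i]
          split_ifs with ha hb hc
          · exact absurd (hb.symm.trans ha) hzw
          · ring
          · ring
          · ring
        exact ih (insert e C) (Finset.insert_subset (hF'E heF') hCE) x z 1
          (Or.inl rfl) hm' hinv'

open Classical in
/-- The degree sequences of the spanning subgraphs of a finite graph form a
jump system. -/
theorem stmt_10 {n : ℕ} (E : Finset (Sym2 (Fin n))) (hE : ∀ e ∈ E, ¬ e.IsDiag)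
    (S : Set (Fin n → ℤ))
    (hS : S = {d | ∃ F ⊆ E, ∀ i : Fin n,
      d i = ((F.filter (fun e => i ∈ e)).card : ℤ)}) :
    ∀ α ∈ S, ∀ β ∈ S, ∀ σ : Fin n → ℤ,
      (∑ i, |σ i|) = 1 →
      (∑ i, |α i + σ i - β i|) = (∑ i, |α i - β i|) - 1 →
      α + σ ∉ S →
      ∃ τ : Fin n → ℤ, (∑ i, |τ i|) = 1 ∧
        (∑ i, |α i + σ i + τ i - β i|) = (∑ i, |α i + σ i - β i|) - 1 ∧
        α + σ + τ ∈ S := by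
  subst hS
  intro α hα β hβ σ hσ hstep _
  obtain ⟨F, hFE, hF⟩ := hα
  obtain ⟨F', hF'E, hF'⟩ := hβ
  have hne : ∃ u, σ u ≠ 0 := by
    by_contra h
    push_neg at h
    simp only [h, abs_zero, Finset.sum_const_zero] at hσ
    exact one_ne_zero hσ.symm
  obtain ⟨u, hu⟩ := hne
  have hupos : 0 < |σ u| := abs_pos.mpr hu
  have hσ0 : ∀ i, i ≠ u → σ i = 0 := by
    intro i hi
    by_contra h
    have hip : 0 < |σ i| := abs_pos.mpr h
    have h2 : |σ u| + |σ i| ≤ ∑ j, |σ j| := by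
      have hle : ({u, i} : Finset (Fin n)).sum (fun j => |σ j|) ≤ ∑ j, |σ j| :=
        Finset.sum_le_sum_of_subset_of_nonneg (Finset.subset_univ _)
          (fun j _ _ => abs_nonneg _)
      rwa [Finset.sum_pair (Ne.symm hi)] at hle
    omega
  have hinv : ∀ i, dego F i = (fun i => α i + σ i) i + (-σ u) * (if i = u then 1 else 0) := by
    intro i
    have : dego F i = α i := (hF i).symm
    rw [this]
    by_cases h : i = u
    · subst h; simp
    · simp [h, hσ0 i h]
  have hσu : |σ u| = 1 := by
    have h1 : |σ u| ≤ ∑ j, |σ j| :=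
      Finset.single_le_sum (f := fun j => |σ j|) (fun j _ => abs_nonneg _) (Finset.mem_univ u)
    omega
  have hδ : (-σ u = 1 ∨ -σ u = -1) := by
    rcases abs_eq (by norm_num : (0:ℤ) ≤ 1) |>.mp hσu with h | h <;> omega
  obtain ⟨τ, hτ1, hτ2, C', hC'E, hC'⟩ :=
    key E hE F' hF'E β (fun i => hF' i) ((F \ F').card + (F' \ F).card) F hFE
      (fun i => α i + σ i) u (-σ u) hδ le_rfl hinv
  refine ⟨τ, hτ1, by simpa using hτ2, C', hC'E, fun i => ?_⟩
  have := hC' i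
  simpa [dego] using this
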